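/- Let X be a Polish space and ε > 0. The set A_ε(X) of Borel probability measures μ on X such that μ({x}) ≥ ε for some point x is closed in the weak topology: if μₙ → μ₀ weakly and each μₙ has an atom of mass at least ε, then μ₀ has an atom of mass at least ε. -/

import Mathlib

open MeasureTheory Set Filter Topology
open scoped ENNReal

/-- On a Polish space, the set of probability measures with an atom of mass at least
`ε` is closed under weak limits. -/
theorem atom_ge_closed_under_weak_limits {X : Type*} [TopologicalSpace X] [PolishSpace X]
    [MeasurableSpace X] [BorelSpace X]
    (ε : ℝ) (hε : 0 < ε)
    (μ : ℕ → ProbabilityMeasure X) (μ₀ : ProbabilityMeasure X)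
    (hconv : Tendsto μ atTop (𝓝 μ₀))
    (hatom : ∀ n, ∃ x : X, ENNReal.ofReal ε ≤ (μ n).toMeasure {x}) :
    ∃ x : X, ENNReal.ofReal ε ≤ μ₀.toMeasure {x} := by
  letI := TopologicalSpace.upgradeIsCompletelyMetrizable X
  choose x hx using hatom
  have hne : Nonempty X := ⟨x 0⟩
  set εe := ENNReal.ofReal ε with hεe
  have hεe0 : 0 < εe := ENNReal.ofReal_pos.mpr hε
  have hεetop : εe ≠ ⊤ := ENNReal.ofReal_ne_top
  have hεe1 : εe ≤ 1 := le_trans (hx 0) (prob_le_one)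
  -- Key pigeonhole step: from any infinite set of indices, an infinite subset of
  -- atoms lies in a ball of radius δ.
  have key : ∀ δ : ℝ, 0 < δ → ∀ S : Set ℕ, S.Infinite →
      ∃ T : Set ℕ, T ⊆ S ∧ T.Infinite ∧ ∃ y : X, ∀ n ∈ T, x n ∈ Metric.ball y δ := by
    intro δ hδ S hS
    set d : ℕ → X := TopologicalSpace.denseSeq X with hd_def
    have hd : DenseRange d := TopologicalSpace.denseRange_denseSeq X
    set f : ℕ → Set X := fun i => Metric.ball (d i) δ with hf_def
    have hUuniv : (⋃ i, f i) = univ := by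
      ext p
      simp only [mem_iUnion, mem_univ, iff_true]
      obtain ⟨i, hi⟩ := hd.exists_dist_lt p hδ
      exact ⟨i, by simpa [f, Metric.mem_ball, dist_comm] using hi⟩
    have htend : Tendsto (fun N => μ₀.toMeasure (accumulate f N)) atTop
        (𝓝 (μ₀.toMeasure (⋃ i, f i))) := tendsto_measure_iUnion_accumulate
    have h1 : μ₀.toMeasure (⋃ i, f i) = 1 := by rw [hUuniv]; exact measure_univ
    have hlt : (1 : ℝ≥0∞) - εe < μ₀.toMeasure (⋃ i, f i) := by
      rw [h1]; exact ENNReal.sub_lt_self ENNReal.one_ne_top one_ne_zero hεe0.ne'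
    obtain ⟨N, hN⟩ := (htend.eventually (eventually_gt_nhds hlt)).exists
    set U : Set X := accumulate f N with hU_def
    have hUopen : IsOpen U := by
      apply isOpen_biUnion
      intro i _
      exact Metric.isOpen_ball
    -- portmanteau, open sets
    have hliminf : μ₀.toMeasure U ≤ atTop.liminf fun n => (μ n).toMeasure U :=
      ProbabilityMeasure.le_liminf_measure_open_of_tendsto hconv hUopen
    have hev : ∀ᶠ n in atTop, (1 : ℝ≥0∞) - εe < (μ n).toMeasure U :=
      eventually_lt_of_lt_liminf (lt_of_lt_of_le hN hliminf)
    have hmem : ∀ n, (1 : ℝ≥0∞) - εe < (μ n).toMeasure U → x n ∈ U := by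
      intro n h
      by_contra hxn
      have hdisj : Disjoint U {x n} := by
        simpa [Set.disjoint_singleton_right] using hxn
      have hsum : (μ n).toMeasure U + (μ n).toMeasure {x n}
          = (μ n).toMeasure (U ∪ {x n}) :=
        (measure_union hdisj (measurableSet_singleton _)).symm
      have hle1 : (μ n).toMeasure U + εe ≤ 1 := by
        calc (μ n).toMeasure U + εe ≤ (μ n).toMeasure U + (μ n).toMeasure {x n} := by
              gcongr; exact hx n
          _ = (μ n).toMeasure (U ∪ {x n}) := hsum
          _ ≤ 1 := prob_le_one
      have hgt1 : (1 : ℝ≥0∞) < (μ n).toMeasure U + εe := by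
        have := ENNReal.add_lt_add_right hεetop h
        rwa [tsub_add_cancel_of_le hεe1] at this
      exact absurd (lt_of_lt_of_le hgt1 hle1) (lt_irrefl _)
    have hbadfin : {n : ℕ | ¬ ((1 : ℝ≥0∞) - εe < (μ n).toMeasure U)}.Finite := by
      rw [← Filter.eventually_cofinite, Nat.cofinite_eq_atTop]
      exact hev
    have hT'inf : (S \ {n : ℕ | ¬ ((1 : ℝ≥0∞) - εe < (μ n).toMeasure U)}).Infinite :=
      hS.diff hbadfin
    set T' : Set ℕ := S \ {n : ℕ | ¬ ((1 : ℝ≥0∞) - εe < (μ n).toMeasure U)} with hT'_def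
    have hT'U : ∀ n ∈ T', x n ∈ U := by
      intro n hn
      exact hmem n (not_not.mp hn.2)
    -- pigeonhole over the finitely many balls
    by_contra hcon
    push_neg at hcon
    have hfin : ∀ i ≤ N, {n ∈ T' | x n ∈ f i}.Finite := by
      intro i _
      by_contra hinf
      have hinf' : {n ∈ T' | x n ∈ f i}.Infinite := hinf
      obtain ⟨n, hn, hnb⟩ := hcon {n ∈ T' | x n ∈ f i} (fun n hn => hn.1.1) hinf' (d i)
      exact hnb hn.2
    have hsub : T' ⊆ ⋃ i ∈ Finset.range (N + 1), {n ∈ T' | x n ∈ f i} := by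
      intro n hn
      have := hT'U n hn
      rw [hU_def, Set.mem_accumulate] at this
      obtain ⟨i, hiN, hi⟩ := this
      exact Set.mem_biUnion (Finset.mem_range.mpr (Nat.lt_succ_of_le hiN)) ⟨hn, hi⟩
    exact hT'inf ((Set.Finite.biUnion (Finset.range (N + 1)).finite_toSet
      (fun i hi => hfin i (Nat.lt_succ_iff.mp (Finset.mem_range.mp hi)))).subset hsub)
  -- iterate the key step to get a nested sequence of infinite index sets
  choose T hTsub hTinf y hy using key
  have hpos : ∀ k : ℕ, (0 : ℝ) < 1 / (k + 1) := by
    intro k; positivity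
  let F : ℕ → {s : Set ℕ // s.Infinite} := fun k =>
    Nat.rec ⟨univ, Set.infinite_univ⟩
      (fun k p => ⟨T (1 / (k + 1)) (hpos k) p.1 p.2, hTinf _ _ _ _⟩) k
  set c : ℕ → X := fun k => y (1 / (k + 1)) (hpos k) (F k).1 (F k).2 with hc_def
  have hFball : ∀ k, ∀ n ∈ (F (k + 1)).1, x n ∈ Metric.ball (c k) (1 / (k + 1)) :=
    fun k => hy _ _ _ _
  have hFmono : ∀ k j, k ≤ j → (F j).1 ⊆ (F k).1 := by
    intro k j hkj
    induction j with
    | zero => simp_all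
    | succ j ih =>
      rcases Nat.lt_or_ge k (j + 1) with h | h
      · exact (hTsub _ _ _ _).trans (ih (Nat.lt_succ_iff.mp h))
      · have : k = j + 1 := le_antisymm hkj h
        subst this; exact subset_rfl
  -- pick an index in each level
  have hmex : ∀ k, ∃ n, n ∈ (F (k + 1)).1 := fun k => (F (k + 1)).2.nonempty
  choose m hm using hmex
  -- the chosen atoms form a Cauchy sequence
  have hdist : ∀ k j j', k ≤ j → k ≤ j' → dist (x (m j)) (x (m j')) < 2 / (k + 1) := by
    intro k j j' hkj hkj'
    have h1 : x (m j) ∈ Metric.ball (c k) (1 / (k + 1)) :=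
      hFball k _ (hFmono (k + 1) (j + 1) (by omega) (hm j))
    have h2 : x (m j') ∈ Metric.ball (c k) (1 / (k + 1)) :=
      hFball k _ (hFmono (k + 1) (j' + 1) (by omega) (hm j'))
    rw [Metric.mem_ball] at h1 h2
    calc dist (x (m j)) (x (m j')) ≤ dist (x (m j)) (c k) + dist (c k) (x (m j')) :=
          dist_triangle _ _ _
      _ < 1 / (k + 1) + 1 / (k + 1) :=
          add_lt_add h1 (by rw [dist_comm]; exact h2)
      _ = 2 / (k + 1) := by ring
  have hcauchy : CauchySeq (fun j => x (m j)) := by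
    rw [Metric.cauchySeq_iff']
    intro r hr
    obtain ⟨K, hK⟩ := exists_nat_gt (2 / r)
    refine ⟨K, fun n hn => ?_⟩
    have h2K : 2 / ((K : ℝ) + 1) < r := by
      rw [div_lt_iff₀ (by positivity)]
      have : 2 / r < (K : ℝ) + 1 := hK.trans (by linarith)
      rw [div_lt_iff₀ hr] at this
      linarith
    exact (hdist K n K hn le_rfl).trans h2K
  obtain ⟨xlim, hxlim⟩ := cauchySeq_tendsto_of_complete hcauchy
  -- all atoms indexed by F (k+1) are within 2/(k+1) of the limit
  have hclose : ∀ k, ∀ n ∈ (F (k + 1)).1, x n ∈ Metric.closedBall xlim (2 / (k + 1)) := by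
    intro k n hn
    rw [Metric.mem_closedBall]
    have htd : Tendsto (fun j => dist (x n) (x (m j))) atTop (𝓝 (dist (x n) xlim)) :=
      Tendsto.dist tendsto_const_nhds hxlim
    refine le_of_tendsto htd (eventually_atTop.mpr ⟨k, fun j hj => le_of_lt ?_⟩)
    have h1 : x n ∈ Metric.ball (c k) (1 / (k + 1)) := hFball k n hn
    have h2 : x (m j) ∈ Metric.ball (c k) (1 / (k + 1)) :=
      hFball k _ (hFmono (k + 1) (j + 1) (by omega) (hm j))
    rw [Metric.mem_ball] at h1 h2
    calc dist (x n) (x (m j)) ≤ dist (x n) (c k) + dist (c k) (x (m j)) := dist_triangle _ _ _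
      _ < 1 / (k + 1) + 1 / (k + 1) :=
          add_lt_add h1 (by rw [dist_comm]; exact h2)
      _ = 2 / (k + 1) := by ring
  -- portmanteau for closed balls gives mass at least ε on each closed ball
  have hball : ∀ k : ℕ, εe ≤ μ₀.toMeasure (Metric.closedBall xlim (2 / (k + 1))) := by
    intro k
    have hfreq : ∃ᶠ n in atTop, εe ≤ (μ n).toMeasure (Metric.closedBall xlim (2 / (k + 1))) := by
      have : ∃ᶠ n in (cofinite : Filter ℕ), n ∈ (F (k + 1)).1 :=
        (F (k + 1)).2.frequently_cofinite
      rw [Nat.cofinite_eq_atTop] at this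
      refine this.mono fun n hn => ?_
      calc εe ≤ (μ n).toMeasure {x n} := hx n
        _ ≤ (μ n).toMeasure (Metric.closedBall xlim (2 / (k + 1))) :=
            measure_mono (Set.singleton_subset_iff.mpr (hclose k n hn))
    calc εe ≤ atTop.limsup fun n => (μ n).toMeasure (Metric.closedBall xlim (2 / (k + 1))) :=
          le_limsup_of_frequently_le' hfreq
      _ ≤ μ₀.toMeasure (Metric.closedBall xlim (2 / (k + 1))) :=
          ProbabilityMeasure.limsup_measure_closed_le_of_tendsto hconv Metric.isClosed_closedBall
  -- continuity from above: the balls shrink to the singleton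
  refine ⟨xlim, ?_⟩
  have hAnti : Antitone fun k : ℕ => Metric.closedBall xlim (2 / (k + 1)) := by
    intro k j hkj
    apply Metric.closedBall_subset_closedBall
    apply div_le_div_of_nonneg_left (by norm_num) (by positivity)
    exact_mod_cast by omega
  have hInter : (⋂ k : ℕ, Metric.closedBall xlim (2 / (k + 1))) = {xlim} := by
    ext p
    simp only [Set.mem_iInter, Metric.mem_closedBall, Set.mem_singleton_iff]
    constructor
    · intro h
      have h0 : Tendsto (fun k : ℕ => 2 / ((k : ℝ) + 1)) atTop (𝓝 0) := by
        have := tendsto_one_div_add_atTop_nhds_zero_nat (𝕜 := ℝ)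
        have h2 : Tendsto (fun n : ℕ => 2 * (1 / ((n : ℝ) + 1))) atTop (𝓝 (2 * 0)) :=
          this.const_mul 2
        simpa [mul_one_div, div_eq_mul_inv] using h2
      have : dist p xlim ≤ 0 := ge_of_tendsto h0 (Eventually.of_forall h)
      exact dist_le_zero.mp this
    · rintro rfl k
      simp only [dist_self]
      positivity
  have htend := tendsto_measure_iInter_atTop (μ := μ₀.toMeasure)
      (s := fun k : ℕ => Metric.closedBall xlim (2 / ((k : ℝ) + 1)))
      (fun k => Metric.isClosed_closedBall.measurableSet.nullMeasurableSet) hAnti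
      ⟨0, measure_ne_top _ _⟩
  rw [hInter] at htend
  exact ge_of_tendsto htend (Eventually.of_forall hball)
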